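/- Suppose F = f + Ψ where f : ℝⁿ → ℝ is L-smooth (L > 0) and Ψ : ℝⁿ → ℝ ∪ {+∞} is proper, closed and convex. Fix x ∈ ℝⁿ and let x̄ = prox_{Ψ/L}(x − ∇f(x)/L). Then (i) there exists a subgradient v ∈ ∂Ψ(x̄) with ‖∇f(x̄) + v‖ ≤ 2‖G_{1/L}(x)‖; and (ii) for every t > 0, G_t(x) = 0 if and only if −∇f(x) ∈ ∂Ψ(x). -/

import Mathlib

open scoped RealInnerProductSpace

section Helpers
variable {H : Type*} [NormedAddCommGroup H] [InnerProductSpace ℝ H]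

lemma my_grad_lip {L : ℝ} (hL : 0 < L) (f : H → ℝ) (f' : H → H)
    (hs : ∀ x y : H, |f x - f y - ⟪f' y, x - y⟫| ≤ L / 2 * ‖x - y‖ ^ 2) :
    ∀ a b : H, ‖f' a - f' b‖ ≤ L * ‖a - b‖ := by
  set g : H → ℝ := fun u => f u + L / 2 * ‖u‖ ^ 2 with hg
  set g' : H → H := fun u => f' u + L • u with hg'
  have hnorm : ∀ u v : H, ‖u - v‖ ^ 2 = ‖u‖ ^ 2 - 2 * ⟪u, v⟫ + ‖v‖ ^ 2 := fun u v => by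
    rw [norm_sub_sq_real]
  have hinner : ∀ u v : H, ⟪g' v, u - v⟫ = ⟪f' v, u - v⟫ + L * ⟪u, v⟫ - L * ‖v‖ ^ 2 := by
    intro u v
    simp only [hg', inner_add_left, real_inner_smul_left, inner_sub_right,
      real_inner_self_eq_norm_sq, real_inner_comm v u]
    ring
  have hconv : ∀ u v : H, g v + ⟪g' v, u - v⟫ ≤ g u := by
    intro u v
    have h1 := abs_le.1 (hs u v)
    have h2 := hnorm u v
    rw [hinner]
    simp only [hg]
    nlinarith [h1.1]
  have hup : ∀ u v : H, g u ≤ g v + ⟪g' v, u - v⟫ + L * ‖u - v‖ ^ 2 := by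
    intro u v
    have h1 := abs_le.1 (hs u v)
    have h2 := hnorm u v
    rw [hinner]
    simp only [hg]
    nlinarith [h1.2]
  have key : ∀ p q : H, g q + ⟪g' q, p - q⟫ + 1 / (4 * L) * ‖g' p - g' q‖ ^ 2 ≤ g p := by
    intro p q
    set a : H := g' p - g' q with ha
    set w : H := p - (2 * L)⁻¹ • a with hw
    have h1 := hconv w q
    have h2 := hup w p
    have hwp : w - p = -((2 * L)⁻¹ • a) := by rw [hw]; abel
    have hn : L * ‖w - p‖ ^ 2 = L * (2 * L)⁻¹ ^ 2 * ‖a‖ ^ 2 := by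
      rw [hwp, norm_neg, norm_smul, mul_pow, Real.norm_eq_abs, sq_abs]
      ring
    have hi1 : ⟪g' p, w - p⟫ = -((2 * L)⁻¹ * ⟪g' p, a⟫) := by
      rw [hwp, inner_neg_right, real_inner_smul_right]
    have hi2 : ⟪g' q, w - q⟫ = ⟪g' q, p - q⟫ - (2 * L)⁻¹ * ⟪g' q, a⟫ := by
      have hwq : w - q = (p - q) - (2 * L)⁻¹ • a := by rw [hw]; abel
      rw [hwq, inner_sub_right, real_inner_smul_right]
    have haa : (2 * L)⁻¹ * ⟪g' p, a⟫ - (2 * L)⁻¹ * ⟪g' q, a⟫ = (2 * L)⁻¹ * ‖a‖ ^ 2 := by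
      rw [← mul_sub, ← inner_sub_left, ← ha, real_inner_self_eq_norm_sq]
    have e3 : (2 * L)⁻¹ * ‖a‖ ^ 2 - L * (2 * L)⁻¹ ^ 2 * ‖a‖ ^ 2
        = 1 / (4 * L) * ‖a‖ ^ 2 := by
      have : (2 * L)⁻¹ - L * (2 * L)⁻¹ ^ 2 = 1 / (4 * L) := by
        field_simp; ring
      nlinarith [this]
    rw [hi1] at h2
    rw [hi2] at h1
    linarith [h1, h2, hn, haa, e3]
  intro p q
  have k1 := key p q
  have k2 := key q p
  have hqp : ⟪g' p, q - p⟫ = -⟪g' p, p - q⟫ := by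
    rw [← inner_neg_right]; congr 1; abel
  have hsym : ‖g' q - g' p‖ = ‖g' p - g' q‖ := norm_sub_rev _ _
  rw [hqp, hsym] at k2
  have esum : 1 / (4 * L) * ‖g' p - g' q‖ ^ 2 + 1 / (4 * L) * ‖g' p - g' q‖ ^ 2
      = 2 * (1 / (4 * L)) * ‖g' p - g' q‖ ^ 2 := by ring
  have hco : 2 * (1 / (4 * L)) * ‖g' p - g' q‖ ^ 2 ≤ ⟪g' p - g' q, p - q⟫ := by
    rw [inner_sub_left]
    linarith
  have hco' : ‖g' p - g' q‖ ^ 2 ≤ 2 * L * ⟪g' p - g' q, p - q⟫ := by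
    have h2L : (0:ℝ) < 2 * L := by linarith
    calc ‖g' p - g' q‖ ^ 2 = 2 * L * (2 * (1 / (4 * L)) * ‖g' p - g' q‖ ^ 2) := by
          field_simp; ring
      _ ≤ 2 * L * ⟪g' p - g' q, p - q⟫ := by
          exact mul_le_mul_of_nonneg_left hco h2L.le
  have hfp : f' p - f' q = (g' p - g' q) - L • (p - q) := by
    simp only [hg', smul_sub]
    abel
  have hexp : ‖f' p - f' q‖ ^ 2 = ‖g' p - g' q‖ ^ 2 - 2 * L * ⟪g' p - g' q, p - q⟫
      + L ^ 2 * ‖p - q‖ ^ 2 := by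
    rw [hfp, norm_sub_sq_real, real_inner_smul_right, norm_smul, Real.norm_eq_abs,
      mul_pow, sq_abs]
    ring
  have hle : ‖f' p - f' q‖ ^ 2 ≤ (L * ‖p - q‖) ^ 2 := by
    rw [hexp]; nlinarith [hco']
  calc ‖f' p - f' q‖ = √(‖f' p - f' q‖ ^ 2) := by rw [Real.sqrt_sq (norm_nonneg _)]
    _ ≤ √((L * ‖p - q‖) ^ 2) := Real.sqrt_le_sqrt hle
    _ = L * ‖p - q‖ := Real.sqrt_sq (by positivity)

lemma my_prox_subgrad (Ψ : H → EReal) (hbot : ∀ x, Ψ x ≠ ⊥) (hne : ∃ x, Ψ x ≠ ⊤)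
    (hconvex : ∀ x y : H, ∀ a b : ℝ, 0 ≤ a → 0 ≤ b → a + b = 1 →
      Ψ (a • x + b • y) ≤ (a : EReal) * Ψ x + (b : EReal) * Ψ y)
    (t : ℝ) (ht : 0 < t) (u p : H)
    (hp : ∀ z, Ψ p + ((‖u - p‖ ^ 2 / (2 * t) : ℝ) : EReal)
      ≤ Ψ z + ((‖u - z‖ ^ 2 / (2 * t) : ℝ) : EReal)) :
    ∀ y, Ψ p + ((⟪t⁻¹ • (u - p), y - p⟫ : ℝ) : EReal) ≤ Ψ y := by
  obtain ⟨z0, hz0⟩ := hne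
  have hpt : Ψ p ≠ ⊤ := by
    intro h
    have h1 := hp z0
    rw [h, EReal.top_add_coe] at h1
    exact absurd (top_le_iff.1 h1) (EReal.add_lt_top hz0 (EReal.coe_ne_top _)).ne
  set r : ℝ := (Ψ p).toReal with hrdef
  have hr : ((r : ℝ) : EReal) = Ψ p := EReal.coe_toReal hpt (hbot p)
  intro y
  by_cases hyt : Ψ y = ⊤
  · rw [hyt]; exact le_top
  set q : ℝ := (Ψ y).toReal with hqdef
  have hq : ((q : ℝ) : EReal) = Ψ y := EReal.coe_toReal hyt (hbot y)
  set I : ℝ := ⟪u - p, y - p⟫ with hI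
  set N : ℝ := ‖y - p‖ ^ 2 with hN
  have hinner : ⟪t⁻¹ • (u - p), y - p⟫ = t⁻¹ * I := real_inner_smul_left _ _ _
  have hstep : ∀ s : ℝ, 0 < s → s ≤ 1 → r + t⁻¹ * I ≤ q + s * (N / (2 * t)) := by
    intro s hs hs1
    set z : H := (1 - s) • p + s • y with hz
    have hcz := hconvex p y (1 - s) s (by linarith) hs.le (by ring)
    rw [← hr, ← hq, ← EReal.coe_mul, ← EReal.coe_mul, ← EReal.coe_add] at hcz
    have hpz := hp z
    have huz : u - z = (u - p) - s • (y - p) := by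
      rw [hz]
      rw [sub_smul, one_smul, smul_sub]
      abel
    have hC : ‖u - z‖ ^ 2 = ‖u - p‖ ^ 2 - 2 * (s * I) + s ^ 2 * N := by
      rw [huz, norm_sub_sq_real, real_inner_smul_right, norm_smul, Real.norm_eq_abs,
        mul_pow, sq_abs, hI, hN]
    have hmono : Ψ z + ((‖u - z‖ ^ 2 / (2 * t) : ℝ) : EReal)
        ≤ (((1 - s) * r + s * q : ℝ) : EReal) + ((‖u - z‖ ^ 2 / (2 * t) : ℝ) : EReal) := by
      exact add_le_add hcz le_rfl
    have hER : ((r + ‖u - p‖ ^ 2 / (2 * t) : ℝ) : EReal)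
        ≤ (((1 - s) * r + s * q + ‖u - z‖ ^ 2 / (2 * t) : ℝ) : EReal) := by
      rw [EReal.coe_add, EReal.coe_add, hr]
      exact le_trans hpz hmono
    have R : r + ‖u - p‖ ^ 2 / (2 * t) ≤ (1 - s) * r + s * q + ‖u - z‖ ^ 2 / (2 * t) :=
      EReal.coe_le_coe_iff.1 hER
    rw [hC] at R
    have h2t : (0:ℝ) < 2 * t := by linarith
    have R2 := mul_le_mul_of_nonneg_right R h2t.le
    have ht0 : t ≠ 0 := ht.ne'
    field_simp at R2
    have hb : 0 ≤ 2 * t * s * q + s ^ 2 * N - 2 * t * s * r - 2 * s * I := by nlinarith [R2]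
    have hkey : q + s * (N / (2 * t)) - (r + t⁻¹ * I)
        = (1 / (2 * t * s)) * (2 * t * s * q + s ^ 2 * N - 2 * t * s * r - 2 * s * I) := by
      field_simp
      ring
    have hpos : (0:ℝ) ≤ 1 / (2 * t * s) := by positivity
    nlinarith [mul_nonneg hpos hb, hkey]
  have hfinal : r + t⁻¹ * I ≤ q := by
    by_contra hcon
    push_neg at hcon
    set K : ℝ := N / (2 * t) with hKdef
    have hK : 0 ≤ K := by rw [hKdef, hN]; positivity
    set ε : ℝ := r + t⁻¹ * I - q with he
    have hε : 0 < ε := by rw [he]; linarith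
    set s : ℝ := min 1 (ε / (K + 1)) with hs
    have hs0 : 0 < s := lt_min one_pos (by positivity)
    have hs1 : s ≤ 1 := min_le_left _ _
    have h1 := hstep s hs0 hs1
    have h2 : s * K ≤ (ε / (K + 1)) * K := mul_le_mul_of_nonneg_right (min_le_right _ _) hK
    have h3 : (ε / (K + 1)) * K < ε := by
      rw [div_mul_eq_mul_div, div_lt_iff₀ (by linarith : (0:ℝ) < K + 1)]
      nlinarith
    linarith
  rw [hinner, ← hr, ← hq, ← EReal.coe_add]
  exact EReal.coe_le_coe_iff.2 hfinal

end Helpers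

/-- near-stationarity measured by the prox-gradient, and
vanishing of the prox-gradient iff first-order optimality. -/
theorem prox_gradient_near_stationarity {n : ℕ} (L : ℝ) (hL : 0 < L)
    (f : EuclideanSpace ℝ (Fin n) → ℝ)
    (f' : EuclideanSpace ℝ (Fin n) → EuclideanSpace ℝ (Fin n))
    (hdiff : ∀ x, HasGradientAt f (f' x) x)
    (hsmooth : ∀ x y : EuclideanSpace ℝ (Fin n),
      |f x - f y - ⟪f' y, x - y⟫| ≤ L / 2 * ‖x - y‖ ^ 2)
    (Ψ : EuclideanSpace ℝ (Fin n) → EReal)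
    (hproper : (∀ x, Ψ x ≠ ⊥) ∧ (∃ x, Ψ x ≠ ⊤))
    (hclosed : LowerSemicontinuous Ψ)
    (hconvex : ∀ x y : EuclideanSpace ℝ (Fin n), ∀ a b : ℝ, 0 ≤ a → 0 ≤ b → a + b = 1 →
      Ψ (a • x + b • y) ≤ (a : EReal) * Ψ x + (b : EReal) * Ψ y)
    (prox : ℝ → EuclideanSpace ℝ (Fin n) → EuclideanSpace ℝ (Fin n))
    (hprox : ∀ t : ℝ, 0 < t → ∀ x z : EuclideanSpace ℝ (Fin n),
      Ψ (prox t x) + ((‖x - prox t x‖ ^ 2 / (2 * t) : ℝ) : EReal)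
        ≤ Ψ z + ((‖x - z‖ ^ 2 / (2 * t) : ℝ) : EReal))
    (G : ℝ → EuclideanSpace ℝ (Fin n) → EuclideanSpace ℝ (Fin n))
    (hG : ∀ t x, G t x = t⁻¹ • (x - prox t (x - t • f' x)))
    (x xbar : EuclideanSpace ℝ (Fin n))
    (hxbar : xbar = prox (1 / L) (x - (1 / L) • f' x)) :
    (∃ v : EuclideanSpace ℝ (Fin n),
      (∀ y, Ψ xbar + ((⟪v, y - xbar⟫ : ℝ) : EReal) ≤ Ψ y) ∧
      ‖f' xbar + v‖ ≤ 2 * ‖G (1 / L) x‖) ∧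
    (∀ t : ℝ, 0 < t →
      (G t x = 0 ↔ ∀ y, Ψ x + ((⟪-f' x, y - x⟫ : ℝ) : EReal) ≤ Ψ y)) := by
  have hlip := my_grad_lip hL f f' hsmooth
  constructor
  · -- part (i)
    have ht : (0:ℝ) < 1 / L := by positivity
    set u : EuclideanSpace ℝ (Fin n) := x - (1 / L) • f' x with hu
    have hxp : xbar = prox (1 / L) u := hxbar
    have hsub := my_prox_subgrad Ψ hproper.1 hproper.2 hconvex (1 / L) ht u xbar
      (by rw [hxp]; exact fun z => hprox (1 / L) ht u z)
    refine ⟨(1 / L)⁻¹ • (u - xbar), hsub, ?_⟩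
    have hinv : ((1 : ℝ) / L)⁻¹ = L := by rw [one_div, inv_inv]
    have hvL : (1 / L)⁻¹ • (u - xbar) = L • (x - xbar) - f' x := by
      rw [hinv, hu, smul_sub, smul_sub, smul_smul, mul_one_div_cancel hL.ne', one_smul]
      module
    have hGval : G (1 / L) x = L • (x - xbar) := by
      rw [hG, ← hu, ← hxp, hinv]
    have hGnorm : ‖G (1 / L) x‖ = L * ‖x - xbar‖ := by
      rw [hGval, norm_smul, Real.norm_eq_abs, abs_of_pos hL]
    have hsplit : f' xbar + (1 / L)⁻¹ • (u - xbar) = (f' xbar - f' x) + L • (x - xbar) := by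
      rw [hvL]; abel
    calc ‖f' xbar + (1 / L)⁻¹ • (u - xbar)‖
        = ‖(f' xbar - f' x) + L • (x - xbar)‖ := by rw [hsplit]
      _ ≤ ‖f' xbar - f' x‖ + ‖L • (x - xbar)‖ := norm_add_le _ _
      _ ≤ L * ‖xbar - x‖ + L * ‖x - xbar‖ := by
          refine add_le_add (hlip xbar x) ?_
          rw [norm_smul, Real.norm_eq_abs, abs_of_pos hL]
      _ = 2 * ‖G (1 / L) x‖ := by rw [hGnorm, norm_sub_rev]; ring
  · -- part (ii)
    intro t ht
    set ux : EuclideanSpace ℝ (Fin n) := x - t • f' x with hux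
    constructor
    · intro hG0
      have hpx : prox t ux = x := by
        have h1 : t⁻¹ • (x - prox t ux) = 0 := by rw [hux, ← hG]; exact hG0
        have h2 : x - prox t ux = 0 := by
          rcases smul_eq_zero.1 h1 with h | h
          · exact absurd h (inv_ne_zero ht.ne')
          · exact h
        exact (sub_eq_zero.1 h2).symm
      have hsub := my_prox_subgrad Ψ hproper.1 hproper.2 hconvex t ht ux x
        (by rw [← hpx]; exact fun z => hprox t ht ux z)
      have hvec : t⁻¹ • (ux - x) = -f' x := by
        rw [hux]
        have : x - t • f' x - x = -(t • f' x) := by abel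
        rw [this, smul_neg, smul_smul, inv_mul_cancel₀ ht.ne', one_smul]
      intro y
      have := hsub y
      rwa [hvec] at this
    · intro h
      obtain ⟨z0, hz0⟩ := hproper.2
      set p : EuclideanSpace ℝ (Fin n) := prox t ux with hp
      have hxt : Ψ x ≠ ⊤ := by
        intro hx
        have h1 := h z0
        rw [hx, EReal.top_add_coe] at h1
        exact hz0 (top_le_iff.1 h1)
      have hpt : Ψ p ≠ ⊤ := by
        intro hptop
        have h1 := hprox t ht ux x
        rw [← hp, hptop, EReal.top_add_coe] at h1
        exact absurd (top_le_iff.1 h1) (EReal.add_lt_top hxt (EReal.coe_ne_top _)).ne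
      set rx : ℝ := (Ψ x).toReal with hrx
      set rp : ℝ := (Ψ p).toReal with hrp
      have hrx' : ((rx : ℝ) : EReal) = Ψ x := EReal.coe_toReal hxt (hproper.1 x)
      have hrp' : ((rp : ℝ) : EReal) = Ψ p := EReal.coe_toReal hpt (hproper.1 p)
      -- real inequality A from subgradient at x evaluated at p
      have A : rx + ⟪-f' x, p - x⟫ ≤ rp := by
        have h1 := h p
        rw [← hrx', ← hrp', ← EReal.coe_add] at h1
        exact EReal.coe_le_coe_iff.1 h1
      -- real inequality B from prox optimality at z = x
      have B : rp + ‖ux - p‖ ^ 2 / (2 * t) ≤ rx + ‖ux - x‖ ^ 2 / (2 * t) := by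
        have h1 := hprox t ht ux x
        rw [← hp, ← hrx', ← hrp', ← EReal.coe_add, ← EReal.coe_add] at h1
        exact EReal.coe_le_coe_iff.1 h1
      set J : ℝ := ⟪f' x, p - x⟫ with hJ
      have hA' : ⟪-f' x, p - x⟫ = -J := by rw [inner_neg_left, hJ]
      have hnx : ‖ux - x‖ ^ 2 = t ^ 2 * ‖f' x‖ ^ 2 := by
        have : ux - x = -(t • f' x) := by rw [hux]; abel
        rw [this, norm_neg, norm_smul, Real.norm_eq_abs, mul_pow, sq_abs]
      have hnp : ‖ux - p‖ ^ 2 = ‖x - p‖ ^ 2 + 2 * (t * J) + t ^ 2 * ‖f' x‖ ^ 2 := by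
        have h1 : ux - p = (x - p) - t • f' x := by rw [hux]; abel
        have h2 : ⟪x - p, f' x⟫ = -J := by
          rw [real_inner_comm, hJ, ← inner_neg_right, neg_sub]
        rw [h1, norm_sub_sq_real, real_inner_smul_right, h2, norm_smul, Real.norm_eq_abs,
          mul_pow, sq_abs]
        ring
      rw [hA'] at A
      rw [hnx, hnp] at B
      have hsq : ‖x - p‖ ^ 2 ≤ 0 := by
        have h2t : (0:ℝ) < 2 * t := by linarith
        have hd : ‖x - p‖ ^ 2 / (2 * t) ≤ 0 := by
          have e1 : (‖x - p‖ ^ 2 + 2 * (t * J) + t ^ 2 * ‖f' x‖ ^ 2) / (2 * t)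
              = ‖x - p‖ ^ 2 / (2 * t) + J + t * ‖f' x‖ ^ 2 / 2 := by
            field_simp
          have e2 : t ^ 2 * ‖f' x‖ ^ 2 / (2 * t) = t * ‖f' x‖ ^ 2 / 2 := by
            field_simp
          rw [e1, e2] at B
          linarith
        have h5 := mul_le_mul_of_nonneg_right hd h2t.le
        rw [div_mul_cancel₀ _ h2t.ne', zero_mul] at h5
        exact h5
      have hxp : x - p = 0 := by
        have hn0 : ‖x - p‖ ^ 2 = 0 := le_antisymm hsq (sq_nonneg _)
        exact norm_eq_zero.1 ((pow_eq_zero_iff (two_ne_zero)).1 hn0)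
      rw [hG, ← hux, ← hp, hxp, smul_zero]
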